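/- Suppose ⟨M_β⟩_{β<κ} is a ⊆-increasing chain of models of S_α^∀ with unions taken at limits, and M_{β+1} preserves closures for M_β for each β. Then M = ∪_{β<κ} M_β preserves closures for each M_β; moreover if each M_β has finite closures, so does M. -/

import Mathlib

open Finset

/-- The number of subsets of `A` on which the relation `E` holds. -/
noncomputable def edgeCount {L V : Type} (rel : L → Finset V → Prop) (E : L)
    (A : Finset V) : ℕ :=
  {e : Finset V | e ⊆ A ∧ rel E e}.ncard

/-- The rank function `δ(A) = |A| - ∑_E α_E · N_E(A)`. -/
noncomputable def delta {L V : Type} [Fintype L] (α : L → ℝ)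
    (rel : L → Finset V → Prop) (A : Finset V) : ℝ :=
  (A.card : ℝ) - ∑ E, α E * (edgeCount rel E A : ℝ)

/-- `A` is strong in `B`: `A ⊆ B` and `δ(A) ≤ δ(A')` for all `A ⊆ A' ⊆ B`. -/
def strong {L V : Type} [Fintype L] (α : L → ℝ) (rel : L → Finset V → Prop)
    (A B : Finset V) : Prop :=
  A ⊆ B ∧ ∀ A' : Finset V, A ⊆ A' → A' ⊆ B → delta α rel A ≤ delta α rel A'

/-- Membership in `K_α`: all substructures have nonnegative rank. -/
def inK {L V : Type} [Fintype L] (α : L → ℝ) (rel : L → Finset V → Prop)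
    (A : Finset V) : Prop :=
  ∀ A' ⊆ A, 0 ≤ delta α rel A'

/-- `(A, B)` is a minimal pair: `A ≤ C` for all `A ⊆ C ⊊ B` but `A ≰ B`. -/
def minPair {L V : Type} [Fintype L] (α : L → ℝ) (rel : L → Finset V → Prop)
    (A B : Finset V) : Prop :=
  A ⊆ B ∧ (∀ C : Finset V, A ⊆ C → C ⊂ B → strong α rel A C) ∧ ¬ strong α rel A B

/-- `M ⊨ S_α^∀`: every finite substructure of `M` lies in `K_α`. -/
def modelsUnivTh {L V : Type} [Fintype L] (α : L → ℝ)
    (rel : L → Finset V → Prop) (M : Set V) : Prop :=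
  ∀ A : Finset V, ↑A ⊆ M → inK α rel A

/-- `X` is closed in `Z`: every minimal pair `(D, E)` with `D ⊆ X` finite and
`E ⊆ Z` satisfies `E ⊆ X`. -/
def closedIn {L V : Type} [Fintype L] (α : L → ℝ)
    (rel : L → Finset V → Prop) (X Z : Set V) : Prop :=
  ∀ D E : Finset V, ↑D ⊆ X → ↑E ⊆ Z → minPair α rel D E → ↑E ⊆ X

/-- A finite `A` is strong in the (possibly infinite) `M`:
`A ≤ F` for every finite `A ⊆ F ⊆ M`. -/
def strongIn {L V : Type} [Fintype L] (α : L → ℝ)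
    (rel : L → Finset V → Prop) (A : Finset V) (M : Set V) : Prop :=
  ↑A ⊆ M ∧ ∀ F : Finset V, A ⊆ F → ↑F ⊆ M → strong α rel A F

/-- `M` has finite closures: every finite subset of `M` is contained in a
finite strong substructure of `M`. -/
def finiteClosures {L V : Type} [Fintype L] (α : L → ℝ)
    (rel : L → Finset V → Prop) (M : Set V) : Prop :=
  ∀ A : Finset V, ↑A ⊆ M → ∃ B : Finset V, A ⊆ B ∧ strongIn α rel B M

/-- `N` preserves closures for `M`: every `X ⊆ M` closed in `M` is closed in `N`. -/
def preservesClosures {L V : Type} [Fintype L] (α : L → ℝ)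
    (rel : L → Finset V → Prop) (M N : Set V) : Prop :=
  ∀ X ⊆ M, closedIn α rel X M → closedIn α rel X N


section Aux

variable {L V : Type} [Fintype L] [DecidableEq V]

omit [Fintype L] [DecidableEq V] in
lemma edgeSet_finite (rel : L → Finset V → Prop) (E : L) (A : Finset V) :
    {e : Finset V | e ⊆ A ∧ rel E e}.Finite :=
  Set.Finite.subset (A.powerset).finite_toSet (fun e he => by
    simpa [Finset.mem_powerset] using he.1)

lemma edgeCount_submod (rel : L → Finset V → Prop) (E : L) (A B : Finset V) :
    edgeCount rel E A + edgeCount rel E B ≤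
      edgeCount rel E (A ∪ B) + edgeCount rel E (A ∩ B) := by
  classical
  have h1 : {e : Finset V | e ⊆ A ∧ rel E e} ∪ {e : Finset V | e ⊆ B ∧ rel E e}
      ⊆ {e : Finset V | e ⊆ A ∪ B ∧ rel E e} := by
    rintro e (⟨h1, h2⟩ | ⟨h1, h2⟩)
    · exact ⟨h1.trans Finset.subset_union_left, h2⟩
    · exact ⟨h1.trans Finset.subset_union_right, h2⟩
  have h2 : {e : Finset V | e ⊆ A ∧ rel E e} ∩ {e : Finset V | e ⊆ B ∧ rel E e}
      = {e : Finset V | e ⊆ A ∩ B ∧ rel E e} := by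
    ext e
    simp only [Set.mem_inter_iff, Set.mem_setOf_eq, Finset.subset_inter_iff]
    tauto
  have hkey := Set.ncard_union_add_ncard_inter
    {e : Finset V | e ⊆ A ∧ rel E e} {e : Finset V | e ⊆ B ∧ rel E e}
    (edgeSet_finite rel E A) (edgeSet_finite rel E B)
  have hle := Set.ncard_le_ncard h1 (edgeSet_finite rel E (A ∪ B))
  unfold edgeCount
  rw [← hkey, h2.symm]
  omega

lemma delta_submod (α : L → ℝ) (hα : ∀ E, 0 < α E) (rel : L → Finset V → Prop)
    (A B : Finset V) :
    delta α rel (A ∪ B) + delta α rel (A ∩ B) ≤ delta α rel A + delta α rel B := by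
  unfold delta
  have hcard : ((A ∪ B).card : ℝ) + ((A ∩ B).card : ℝ) = (A.card : ℝ) + B.card := by
    exact_mod_cast congrArg (Nat.cast (R := ℝ)) (Finset.card_union_add_card_inter A B)
  have hsum : ∑ E, α E * (edgeCount rel E A : ℝ) + ∑ E, α E * (edgeCount rel E B : ℝ)
      ≤ ∑ E, α E * (edgeCount rel E (A ∪ B) : ℝ)
        + ∑ E, α E * (edgeCount rel E (A ∩ B) : ℝ) := by
    rw [← Finset.sum_add_distrib, ← Finset.sum_add_distrib]
    refine Finset.sum_le_sum fun E _ => ?_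
    have h := edgeCount_submod rel E A B
    have h' : (edgeCount rel E A : ℝ) + edgeCount rel E B
        ≤ (edgeCount rel E (A ∪ B) : ℝ) + edgeCount rel E (A ∩ B) := by
      exact_mod_cast h
    nlinarith [(hα E).le]
  linarith

lemma minPair_delta (α : L → ℝ) (rel : L → Finset V → Prop) {D E : Finset V}
    (h : minPair α rel D E) :
    ∀ C, D ⊆ C → C ⊂ E → delta α rel E < delta α rel C := by
  obtain ⟨hDE, hmin, hns⟩ := h
  have hE : delta α rel E < delta α rel D := by
    by_contra hc
    push_neg at hc
    apply hns
    refine ⟨hDE, fun A' hDA' hA'E => ?_⟩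
    rcases hA'E.ssubset_or_eq with hss | rfl
    · exact (hmin A' hDA' hss).2 A' hDA' Finset.Subset.rfl
    · exact hc
  intro C hDC hCE
  have := (hmin C hDC hCE).2 C hDC Finset.Subset.rfl
  linarith

lemma strongIn_closedIn (α : L → ℝ) (hα : ∀ E, 0 < α E) (rel : L → Finset V → Prop)
    {B : Finset V} {M : Set V} (h : strongIn α rel B M) :
    closedIn α rel (↑B) M := by
  intro D E hD hE hmp
  by_contra hEB
  have hDB : D ⊆ B := Finset.coe_subset.mp hD
  have hEB' : ¬ E ⊆ B := fun hh => hEB (Finset.coe_subset.mpr hh)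
  have hIE : E ∩ B ⊂ E := by
    refine ⟨Finset.inter_subset_left, fun hh => hEB' ?_⟩
    exact fun x hx => (Finset.mem_inter.mp (hh hx)).2
  have hDI : D ⊆ E ∩ B := Finset.subset_inter hmp.1 hDB
  have h1 : delta α rel E < delta α rel (E ∩ B) := minPair_delta α rel hmp _ hDI hIE
  have h2 := delta_submod α hα rel B E
  rw [Finset.inter_comm B E] at h2
  have h3 : (↑(B ∪ E) : Set V) ⊆ M := by
    rw [Finset.coe_union]
    exact Set.union_subset h.1 hE
  have h4 := (h.2 (B ∪ E) Finset.subset_union_left h3).2 (B ∪ E)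
    Finset.subset_union_left Finset.Subset.rfl
  linarith

lemma closedIn_strongIn (α : L → ℝ) (rel : L → Finset V → Prop)
    {B : Finset V} {M : Set V} (hBM : (↑B : Set V) ⊆ M)
    (h : closedIn α rel (↑B) M) : strongIn α rel B M := by
  refine ⟨hBM, ?_⟩
  suffices key : ∀ n (F : Finset V), F.card ≤ n → B ⊆ F → (↑F : Set V) ⊆ M →
      strong α rel B F by
    intro F hBF hFM
    exact key F.card F le_rfl hBF hFM
  intro n
  induction n with
  | zero =>
    intro F hc hBF hFM
    have hF : F = ∅ := Finset.card_eq_zero.mp (Nat.le_zero.mp hc)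
    subst hF
    have hB : B = ∅ := Finset.subset_empty.mp hBF
    subst hB
    exact ⟨Finset.Subset.rfl, fun A' h1 h2 => by
      have : A' = ∅ := Finset.subset_empty.mp h2
      subst this; exact le_rfl⟩
  | succ n IH =>
    intro F hc hBF hFM
    refine ⟨hBF, ?_⟩
    intro A' hBA' hA'F
    rcases hA'F.ssubset_or_eq with hss | rfl
    · have hcard : A'.card ≤ n := by
        have := Finset.card_lt_card hss
        omega
      have hA'M : (↑A' : Set V) ⊆ M := (Finset.coe_subset.mpr hss.subset).trans hFM
      exact (IH A' hcard hBA' hA'M).2 A' hBA' Finset.Subset.rfl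
    · by_contra hlt
      push_neg at hlt
      have hns : ¬ strong α rel B A' := fun hs =>
        absurd (hs.2 A' hBA' Finset.Subset.rfl) (not_le.mpr hlt)
      have hmp : minPair α rel B A' := by
        refine ⟨hBA', fun C hBC hCA' => ?_, hns⟩
        have hcard : C.card ≤ n := by
          have := Finset.card_lt_card hCA'
          omega
        exact IH C hcard hBC ((Finset.coe_subset.mpr hCA'.subset).trans hFM)
      have hsub : (↑A' : Set V) ⊆ ↑B := h B A' Set.Subset.rfl hFM hmp
      have : A' = B := Finset.Subset.antisymm (Finset.coe_subset.mp hsub) hBA'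
      rw [this] at hlt
      exact lt_irrefl _ hlt

end Aux

/-- For a ⊆-increasing chain `⟨M β⟩_{β<κ}` of models of `S_α^∀` with unions at
limits, in which each `M (β+1)` preserves closures for `M β`, the union
`⋃_{β<κ} M β` preserves closures for each `M β`; and if each `M β` has finite
closures then so does the union. -/
theorem stmt16 {L V : Type} [Fintype L] [DecidableEq V] (α : L → ℝ)
    (hα : ∀ E, 0 < α E ∧ α E ≤ 1) (ar : L → ℕ) (har : ∀ E, 2 ≤ ar E)
    (rel : L → Finset V → Prop) (hedge : ∀ E e, rel E e → e.card = ar E)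
    (κ : Ordinal) (M : Ordinal → Set V)
    (hmono : ∀ β γ : Ordinal, β ≤ γ → γ < κ → M β ⊆ M γ)
    (hlim : ∀ γ : Ordinal, γ < κ → Order.IsSuccLimit γ → M γ = ⋃ (β : Ordinal) (_ : β < γ), M β)
    (hmodels : ∀ β : Ordinal, β < κ → modelsUnivTh α rel (M β))
    (hpres : ∀ β : Ordinal, β + 1 < κ → preservesClosures α rel (M β) (M (β + 1))) :
    (∀ β : Ordinal, β < κ →
        preservesClosures α rel (M β) (⋃ (β' : Ordinal) (_ : β' < κ), M β')) ∧
      ((∀ β : Ordinal, β < κ → finiteClosures α rel (M β)) →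
        finiteClosures α rel (⋃ (β' : Ordinal) (_ : β' < κ), M β')) := by
  classical
  have hαpos : ∀ E, 0 < α E := fun E => (hα E).1
  -- every finite subset of a partial union lies in one stage
  have key : ∀ θ : Ordinal, θ ≤ κ → ∀ E : Finset V,
      (↑E : Set V) ⊆ ⋃ (β' : Ordinal) (_ : β' < θ), M β' →
      ∀ β0 : Ordinal, β0 < θ →
        ∃ γ, β0 ≤ γ ∧ γ < θ ∧ (↑E : Set V) ⊆ M γ := by
    intro θ hθ E hE β0 hβ0
    have hex : ∀ x ∈ E, ∃ γ, γ < θ ∧ x ∈ M γ := by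
      intro x hx
      have := hE (Finset.mem_coe.mpr hx)
      simpa using this
    choose f hf1 hf2 using hex
    refine ⟨(E.attach.sup fun x => f x.1 x.2) ⊔ β0, le_sup_right, ?_, ?_⟩
    · refine sup_lt_iff.mpr ⟨?_, hβ0⟩
      refine (Finset.sup_lt_iff (bot_le.trans_lt hβ0)).mpr ?_
      rintro ⟨x, hx⟩ -
      exact hf1 x hx
    · intro v hv
      have hv' : v ∈ E := Finset.mem_coe.mp hv
      have hle : f v hv' ≤ (E.attach.sup fun x => f x.1 x.2) ⊔ β0 :=
        (Finset.le_sup (f := fun x : {x // x ∈ E} => f x.1 x.2) (Finset.mem_attach E ⟨v, hv'⟩)).trans le_sup_left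
      refine hmono (f v hv') _ hle ?_ (hf2 v hv')
      calc (E.attach.sup fun x => f x.1 x.2) ⊔ β0 < θ := by
            refine sup_lt_iff.mpr ⟨?_, hβ0⟩
            refine (Finset.sup_lt_iff (bot_le.trans_lt hβ0)).mpr ?_
            rintro ⟨x, hx⟩ -
            exact hf1 x hx
        _ ≤ κ := hθ
  -- closedness propagates up the chain
  have main : ∀ β : Ordinal, β < κ → ∀ X : Set V, X ⊆ M β →
      closedIn α rel X (M β) →
      ∀ γ : Ordinal, β ≤ γ → γ < κ → closedIn α rel X (M γ) := by
    intro β hβ X hX hcl γ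
    induction γ using Ordinal.induction with
    | h γ IH =>
      intro hβγ hγκ
      rcases eq_or_lt_of_le hβγ with rfl | hlt
      · exact hcl
      rcases Ordinal.zero_or_succ_or_isSuccLimit γ with h0 | ⟨δ, rfl⟩ | hlimit
      · exact absurd (h0 ▸ hlt) (not_lt_zero : ¬ β < 0)
      · have hδκ : δ < κ := (Order.lt_succ δ).trans hγκ
        have hβδ : β ≤ δ := Order.lt_succ_iff.mp hlt
        have hclδ := IH δ (Order.lt_succ δ) hβδ hδκ
        have hXδ : X ⊆ M δ := hX.trans (hmono β δ hβδ hδκ)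
        have hp := hpres δ (by rwa [Ordinal.add_one_eq_succ]) X hXδ hclδ
        rwa [Ordinal.add_one_eq_succ] at hp
      · intro D Ee hD hE hmp
        rw [hlim γ hγκ hlimit] at hE
        obtain ⟨δ, hβδ, hδγ, hEδ⟩ := key γ hγκ.le Ee hE β hlt
        exact IH δ hδγ hβδ (hδγ.trans hγκ) D Ee hD hEδ hmp
  have part1 : ∀ β : Ordinal, β < κ →
      preservesClosures α rel (M β) (⋃ (β' : Ordinal) (_ : β' < κ), M β') := by
    intro β hβ X hX hcl D Ee hD hE hmp
    obtain ⟨γ, hβγ, hγκ, hEγ⟩ := key κ le_rfl Ee hE β hβ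
    exact main β hβ X hX hcl γ hβγ hγκ D Ee hD hEγ hmp
  refine ⟨part1, ?_⟩
  intro hfc A hA
  rcases eq_or_lt_of_le (zero_le (a := κ)) with h0 | hκpos
  · -- κ = 0: the union is empty
    have hMU : (⋃ (β' : Ordinal) (_ : β' < κ), M β') = (∅ : Set V) := by
      ext x
      simp only [Set.mem_iUnion, Set.mem_empty_iff_false, iff_false, not_exists]
      intro β' hβ'
      exact absurd hβ' (by rw [← h0]; exact (not_lt_zero : ¬ β' < 0))
    rw [hMU] at hA
    have hA0 : A = ∅ := by
      apply Finset.eq_empty_of_forall_notMem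
      intro x hx
      exact hA (Finset.mem_coe.mpr hx)
    refine ⟨∅, by simp [hA0], by simp [hMU], ?_⟩
    intro F hBF hFM
    rw [hMU] at hFM
    have hF0 : F = ∅ := by
      apply Finset.eq_empty_of_forall_notMem
      intro x hx
      exact hFM (Finset.mem_coe.mpr hx)
    subst hF0
    exact ⟨Finset.Subset.rfl, fun A' h1 h2 => by
      have : A' = ∅ := Finset.subset_empty.mp h2
      subst this; exact le_rfl⟩
  · obtain ⟨β, _, hβκ, hAβ⟩ := key κ le_rfl A hA 0 hκpos
    obtain ⟨B, hAB, hBstr⟩ := hfc β hβκ A hAβ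
    have hBcl : closedIn α rel (↑B) (M β) := strongIn_closedIn α hαpos rel hBstr
    have hBclU : closedIn α rel (↑B) (⋃ (β' : Ordinal) (_ : β' < κ), M β') :=
      part1 β hβκ (↑B) hBstr.1 hBcl
    have hBMU : (↑B : Set V) ⊆ ⋃ (β' : Ordinal) (_ : β' < κ), M β' :=
      hBstr.1.trans (Set.subset_iUnion₂ (s := fun β' (_ : β' < κ) => M β') β hβκ)
    exact ⟨B, hAB, closedIn_strongIn α rel hBMU hBclU⟩
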